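/- Let L : Θ → ℝ be nonnegative with finite positive supremum M, Θ_A ⊆ Θ, r_A = sup L(Θ_A)/sup L(Θ_Aᶜ), and k* = sup{k > 1 : S_k ⊆ Θ_A} (set k* = 1 if no such k exists), where S_k = {θ : L(θ) > M/k}. Then r_A > 1 if and only if k* > 1, and in that case r_A = k*. -/

import Mathlib

theorem stmt11 {Θ : Type*} (L : Θ → ℝ) (hnonneg : ∀ θ, 0 ≤ L θ)
    (hbdd : BddAbove (Set.range L))
    (M : ℝ) (hM : M = sSup (L '' (Set.univ : Set Θ))) (hMpos : 0 < M)
    (ΘA : Set Θ) (hAc : 0 < sSup (L '' ΘAᶜ))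
    (rA : ℝ) (hrA : rA = sSup (L '' ΘA) / sSup (L '' ΘAᶜ))
    (kstar : ℝ)
    (hkstar : kstar = sSup (insert 1 {k : ℝ | 1 < k ∧ {θ | L θ > M / k} ⊆ ΘA})) :
    (rA > 1 ↔ kstar > 1) ∧ (rA > 1 → rA = kstar) := by
  have hbddA : BddAbove (L '' ΘA) := hbdd.mono (Set.image_subset_range _ _)
  have hbddAc : BddAbove (L '' ΘAᶜ) := hbdd.mono (Set.image_subset_range _ _)
  have hbddU : BddAbove (L '' (Set.univ : Set Θ)) := hbdd.mono (Set.image_subset_range _ _)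
  have hAcne : ΘAᶜ.Nonempty := by
    by_contra h
    rw [Set.not_nonempty_iff_eq_empty] at h
    rw [h, Set.image_empty, Real.sSup_empty] at hAc
    exact lt_irrefl 0 hAc
  set A := sSup (L '' ΘA) with hA
  set B := sSup (L '' ΘAᶜ) with hB
  have hBleM : B ≤ M := by
    rw [hM]
    exact csSup_le_csSup hbddU (hAcne.image L) (Set.image_mono (Set.subset_univ _))
  have hAleM : A ≤ M := by
    rcases ΘA.eq_empty_or_nonempty with h | h
    · rw [hA, h, Set.image_empty, Real.sSup_empty]; exact hMpos.le
    · rw [hM]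
      exact csSup_le_csSup hbddU (h.image L) (Set.image_mono (Set.subset_univ _))
  rcases eq_or_lt_of_le hBleM with heq | hlt
  · -- B = M : both sides false
    have hK : {k : ℝ | 1 < k ∧ {θ | L θ > M / k} ⊆ ΘA} = ∅ := by
      ext k
      simp only [Set.mem_setOf_eq, Set.mem_empty_iff_false, iff_false, not_and]
      intro hk hsub
      have hBle : B ≤ M / k := csSup_le (hAcne.image L) (by
        rintro x ⟨θ, hθ, rfl⟩
        by_contra hc
        exact hθ (hsub (lt_of_not_ge hc)))
      have hdlt : M / k < M := div_lt_self hMpos hk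
      linarith [heq ▸ hBle]
    have hk1 : kstar = 1 := by
      rw [hkstar, hK]
      simp
    have hrA1 : rA ≤ 1 := by
      rw [hrA, div_le_one hAc]
      linarith
    constructor
    · constructor
      · intro h; linarith
      · intro h; linarith
    · intro h; linarith
  · -- B < M
    have hAne : ΘA.Nonempty := by
      by_contra h
      rw [Set.not_nonempty_iff_eq_empty] at h
      have : B = M := by rw [hB, hM, h, Set.compl_empty]
      linarith
    have hMax : M = A ⊔ B := by
      rw [hM, hA, hB,
        show (Set.univ : Set Θ) = ΘA ∪ ΘAᶜ from (Set.union_compl_self ΘA).symm,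
        Set.image_union]
      exact csSup_union hbddA (hAne.image L) hbddAc (hAcne.image L)
    have hAM : A = M := by
      rcases le_total A B with h | h
      · rw [sup_eq_right.mpr h] at hMax; linarith
      · rw [sup_eq_left.mpr h] at hMax; exact hMax.symm
    have hkeq : {k : ℝ | 1 < k ∧ {θ | L θ > M / k} ⊆ ΘA} = Set.Ioc 1 (M / B) := by
      ext k
      simp only [Set.mem_setOf_eq, Set.mem_Ioc]
      constructor
      · rintro ⟨hk, hsub⟩
        refine ⟨hk, ?_⟩
        have hkpos : (0:ℝ) < k := lt_trans zero_lt_one hk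
        have hBle : B ≤ M / k := csSup_le (hAcne.image L) (by
          rintro x ⟨θ, hθ, rfl⟩
          by_contra hc
          exact hθ (hsub (lt_of_not_ge hc)))
        rw [le_div_iff₀ hAc]
        rw [le_div_iff₀ hkpos] at hBle
        nlinarith
      · rintro ⟨hk, hle⟩
        refine ⟨hk, fun θ hθ => ?_⟩
        by_contra hθA
        have h1 : L θ ≤ B := le_csSup hbddAc ⟨θ, hθA, rfl⟩
        have hkpos : (0:ℝ) < k := lt_trans zero_lt_one hk
        have h2 : B ≤ M / k := by
          rw [le_div_iff₀ hkpos]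
          rw [le_div_iff₀ hAc] at hle
          nlinarith
        have h3 : L θ > M / k := hθ
        linarith
    have hMB1 : 1 < M / B := (one_lt_div hAc).mpr hlt
    have hkstar' : kstar = M / B := by
      rw [hkstar, hkeq]
      have hins : insert (1:ℝ) (Set.Ioc 1 (M/B)) = Set.Icc 1 (M/B) := by
        ext x
        simp only [Set.mem_insert_iff, Set.mem_Ioc, Set.mem_Icc]
        constructor
        · rintro (rfl | ⟨h1, h2⟩)
          · exact ⟨le_refl _, hMB1.le⟩
          · exact ⟨h1.le, h2⟩
        · rintro ⟨h1, h2⟩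
          rcases eq_or_lt_of_le h1 with h | h
          · exact Or.inl h.symm
          · exact Or.inr ⟨h, h2⟩
      rw [hins, csSup_Icc hMB1.le]
    have hrA' : rA = M / B := by rw [hrA, hAM]
    refine ⟨⟨fun _ => by rw [hkstar']; exact hMB1, fun _ => by rw [hrA']; exact hMB1⟩,
      fun _ => by rw [hrA', hkstar']⟩
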